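/- If Q is a connected quiver on at most 4 vertices, then Red(Q) ≥ |V(Q)| - 1. -/

import Mathlib

/-- Matrix mutation of the exchange matrix `B` at vertex `k`. -/
def mutB {V : Type*} [DecidableEq V] (k : V) (B : V → V → ℤ) : V → V → ℤ :=
  fun i j => if i = k ∨ j = k then -B i j
    else B i j + max (B i k) 0 * max (B k j) 0 - max (-B i k) 0 * max (-B k j) 0

/-- Mutation of the frozen block `C` (rows: mutable vertices, columns: frozen vertices). -/
def mutC {V : Type*} [DecidableEq V] (k : V) (B C : V → V → ℤ) : V → V → ℤ :=
  fun i j => if i = k then -C i j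
    else C i j + max (B i k) 0 * max (C k j) 0 - max (-B i k) 0 * max (-C k j) 0

/-- Mutation of an extended (framed) matrix: principal part and frozen block. -/
def mutE {V : Type*} [DecidableEq V] (k : V) (p : (V → V → ℤ) × (V → V → ℤ)) :
    (V → V → ℤ) × (V → V → ℤ) :=
  (mutB k p.1, mutC k p.1 p.2)

/-- Apply a sequence of mutations to an extended matrix. -/
def applyE {V : Type*} [DecidableEq V] (l : List V) (p : (V → V → ℤ) × (V → V → ℤ)) :
    (V → V → ℤ) × (V → V → ℤ) :=
  l.foldl (fun q k => mutE k q) p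

/-- The framed quiver of `B`: frozen block is the identity. -/
def framed {V : Type*} [DecidableEq V] (B : V → V → ℤ) : (V → V → ℤ) × (V → V → ℤ) :=
  (B, fun i j => if i = j then 1 else 0)

/-- A mutable vertex is green if its frozen row has a positive entry. -/
def IsGreen {V : Type*} (p : (V → V → ℤ) × (V → V → ℤ)) (i : V) : Prop :=
  ∃ j, 0 < p.2 i j

/-- A mutable vertex is red if its frozen row has a negative entry. -/
def IsRed {V : Type*} (p : (V → V → ℤ) × (V → V → ℤ)) (i : V) : Prop :=
  ∃ j, p.2 i j < 0

/-- A green sequence: each mutation occurs at a currently green vertex. -/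
def IsGreenSeq {V : Type*} [DecidableEq V] (p : (V → V → ℤ) × (V → V → ℤ)) : List V → Prop
  | [] => True
  | k :: l => IsGreen p k ∧ IsGreenSeq (mutE k p) l

/-- Number of red vertices of an extended matrix. -/
noncomputable def redCount {V : Type*} (p : (V → V → ℤ) × (V → V → ℤ)) : ℕ :=
  Nat.card {i : V // IsRed p i}

/-- The red size `Red(Q)`: max number of red vertices attainable by a green sequence. -/
noncomputable def RedNum {V : Type*} [DecidableEq V] (B : V → V → ℤ) : ℕ :=
  sSup {m : ℕ | ∃ l : List V, IsGreenSeq (framed B) l ∧ redCount (applyE l (framed B)) = m}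

/-- The unrestricted red size `uRed(Q)`. -/
noncomputable def uRedNum {V : Type*} [DecidableEq V] (B : V → V → ℤ) : ℕ :=
  sSup {m : ℕ | ∃ l : List V, redCount (applyE l (framed B)) = m}

/-- `Q` admits a maximal green sequence. -/
def AdmitsMGS {V : Type*} [DecidableEq V] (B : V → V → ℤ) : Prop :=
  ∃ l : List V, IsGreenSeq (framed B) l ∧ ∀ i, IsRed (applyE l (framed B)) i

/-- `Q` admits a reddening sequence. -/
def AdmitsReddening {V : Type*} [DecidableEq V] (B : V → V → ℤ) : Prop :=
  ∃ l : List V, ∀ i, IsRed (applyE l (framed B)) i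

/-- Skew-symmetry. -/
def IsSkew {V : Type*} (B : V → V → ℤ) : Prop := ∀ i j, B i j = - B j i

/-- Connectedness of the underlying graph of a quiver. -/
def QConnected {V : Type*} (B : V → V → ℤ) : Prop :=
  (SimpleGraph.fromRel (fun i j => B i j ≠ 0)).Connected
section Aux

lemma max_zero_of_nonpos {x : ℤ} (h : x ≤ 0) : max x 0 = 0 := max_eq_right h

lemma isSkew_mutB {V : Type*} [DecidableEq V] (k : V) {B : V → V → ℤ} (hB : IsSkew B) :
    IsSkew (mutB k B) := by
  intro i j
  simp only [mutB]
  by_cases h : i = k ∨ j = k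
  · rw [if_pos h, if_pos h.symm, hB i j]
  · rw [if_neg h, if_neg fun hc => h hc.symm, hB i j, hB i k, hB k j]
    simp only [neg_neg]
    ring

lemma green_main {n : ℕ} :
    ∀ (todo done : List (Fin n)) (B C : Fin n → Fin n → ℤ),
      IsSkew B →
      (done ++ todo).Nodup →
      (∀ a ∈ done, ∀ j, C a j = if a = j then -1 else 0) →
      (∀ b ∈ todo, ∀ j, C b j = if b = j then 1 else 0) →
      (∀ a ∈ done, ∀ b ∈ todo, B a b ≤ 0) →
      todo.Pairwise (fun b c => 0 ≤ B b c) →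
      IsGreenSeq (B, C) todo ∧
      ∀ a ∈ done ++ todo, ∀ j,
        (applyE todo (B, C)).2 a j = if a = j then -1 else 0 := by
  intro todo
  induction todo with
  | nil =>
    intro done B C _ _ hdone _ _ _
    refine ⟨trivial, ?_⟩
    intro a ha j
    simp only [List.append_nil] at ha
    exact hdone a ha j
  | cons k rest ih =>
    intro done B C hskew hnd hdone htodo hdt hpair
    have hkmem : k ∈ k :: rest := List.mem_cons_self
    have hknd : k ∉ done := by
      have hdisj := (List.nodup_append'.mp hnd).2.2
      intro hk
      exact hdisj hk hkmem
    have hkrest : k ∉ rest := by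
      have := (List.nodup_append'.mp hnd).2.1
      exact (List.nodup_cons.mp this).1
    have hCk : ∀ j, C k j = if k = j then 1 else 0 := htodo k hkmem
    have hBak : ∀ a ∈ done, B a k ≤ 0 := fun a ha => hdt a ha k hkmem
    have hBkb : ∀ b ∈ rest, 0 ≤ B k b := by
      intro b hb
      exact (List.pairwise_cons.mp hpair).1 b hb
    have hBbk : ∀ b ∈ rest, B b k ≤ 0 := by
      intro b hb
      rw [hskew b k]
      have := hBkb b hb
      omega
    have hCk_nonneg : ∀ j, max (-C k j) 0 = 0 := by
      intro j
      apply max_zero_of_nonpos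
      rw [hCk j]
      by_cases h : k = j <;> simp [h]
    have hC' : ∀ a, a ≠ k → B a k ≤ 0 → ∀ j, mutC k B C a j = C a j := by
      intro a hak hBk j
      simp only [mutC, if_neg hak, max_zero_of_nonpos hBk, hCk_nonneg j]
      ring
    have hdone' : ∀ a ∈ done ++ [k], ∀ j,
        mutC k B C a j = if a = j then -1 else 0 := by
      intro a ha j
      rcases List.mem_append.mp ha with ha | ha
      · have hak : a ≠ k := fun h => hknd (h ▸ ha)
        rw [hC' a hak (hBak a ha) j]
        exact hdone a ha j
      · have hak : a = k := by simpa using ha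
        subst hak
        simp only [mutC, if_pos rfl, hCk j]
        by_cases h : a = j <;> simp [h]
    have htodo' : ∀ b ∈ rest, ∀ j, mutC k B C b j = if b = j then 1 else 0 := by
      intro b hb j
      have hbk : b ≠ k := fun h => hkrest (h ▸ hb)
      rw [hC' b hbk (hBbk b hb) j]
      exact htodo b (List.mem_cons_of_mem k hb) j
    have hB'unch : ∀ a b, a ≠ k → b ≠ k → B a k ≤ 0 → 0 ≤ B k b →
        mutB k B a b = B a b := by
      intro a b hak hbk h1 h2
      have hor : ¬(a = k ∨ b = k) := by tauto
      simp only [mutB, if_neg hor, max_zero_of_nonpos h1,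
        max_zero_of_nonpos (by omega : -B k b ≤ 0)]
      ring
    have hdt' : ∀ a ∈ done ++ [k], ∀ b ∈ rest, mutB k B a b ≤ 0 := by
      intro a ha b hb
      have hbk : b ≠ k := fun h => hkrest (h ▸ hb)
      rcases List.mem_append.mp ha with ha | ha
      · have hak : a ≠ k := fun h => hknd (h ▸ ha)
        rw [hB'unch a b hak hbk (hBak a ha) (hBkb b hb)]
        exact hdt a ha b (List.mem_cons_of_mem k hb)
      · have hak : a = k := by simpa using ha
        rw [hak]
        have hkb := hBkb b hb
        simp only [mutB]
        split
        · omega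
        · simp_all
    have hpair' : rest.Pairwise (fun b c => 0 ≤ mutB k B b c) := by
      refine ((List.pairwise_cons.mp hpair).2).imp_of_mem ?_
      intro b c hb hc hbc
      have hbk : b ≠ k := fun h => hkrest (h ▸ hb)
      have hck : c ≠ k := fun h => hkrest (h ▸ hc)
      rw [hB'unch b c hbk hck (hBbk b hb) (hBkb c hc)]
      exact hbc
    have hnd' : ((done ++ [k]) ++ rest).Nodup := by
      have heq : (done ++ [k]) ++ rest = done ++ (k :: rest) := by simp
      rw [heq]
      exact hnd
    have ihres := ih (done ++ [k]) (mutB k B) (mutC k B C)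
      (isSkew_mutB k hskew) hnd' hdone' htodo' hdt' hpair'
    constructor
    · refine ⟨⟨k, ?_⟩, ?_⟩
      · show (0:ℤ) < C k k
        rw [hCk k]
        simp
      · exact ihres.1
    · intro a ha j
      have ha' : a ∈ (done ++ [k]) ++ rest := by
        simp only [List.append_assoc, List.singleton_append]
        exact ha
      have heq : applyE (k :: rest) (B, C) = applyE rest (mutE k (B, C)) := rfl
      rw [heq]
      exact ihres.2 a ha' j

lemma tourn_bool (a01 a10 a02 a20 a03 a30 a12 a21 a13 a31 a23 a32 : Bool)
    (h01 : (a01 || a10) = true) (h02 : (a02 || a20) = true) (h03 : (a03 || a30) = true) (h12 : (a12 || a21) = true) (h13 : (a13 || a31) = true) (h23 : (a23 || a32) = true) :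
    ((a01 && a02 && a12) || (a01 && a03 && a13) || (a02 && a01 && a21) || (a02 && a03 && a23) || (a03 && a01 && a31) || (a03 && a02 && a32) || (a10 && a12 && a02) || (a10 && a13 && a03) || (a12 && a10 && a20) || (a12 && a13 && a23) || (a13 && a10 && a30) || (a13 && a12 && a32) || (a20 && a21 && a01) || (a20 && a23 && a03) || (a21 && a20 && a10) || (a21 && a23 && a13) || (a23 && a20 && a30) || (a23 && a21 && a31) || (a30 && a31 && a01) || (a30 && a32 && a02) || (a31 && a30 && a10) || (a31 && a32 && a12) || (a32 && a30 && a20) || (a32 && a31 && a21)) = true := by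
  revert h01 h02 h03 h12 h13 h23 a01 a10 a02 a20 a03 a30 a12 a21 a13 a31 a23 a32
  decide

lemma exists_triple (B : Fin 4 → Fin 4 → ℤ) (hB : IsSkew B) :
    ∃ a b c : Fin 4, a ≠ b ∧ a ≠ c ∧ b ≠ c ∧ 0 ≤ B a b ∧ 0 ≤ B a c ∧ 0 ≤ B b c := by
  have tot : ∀ a b : Fin 4, (Decidable.decide (0 ≤ B a b) || decide (0 ≤ B b a)) = true := by
    intro a b
    rcases le_or_gt 0 (B a b) with h | h
    · simp [h]
    · have : 0 ≤ B b a := by rw [hB b a]; omega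
      simp [this]
  have key := tourn_bool (Decidable.decide (0 ≤ B 0 1)) (Decidable.decide (0 ≤ B 1 0)) (Decidable.decide (0 ≤ B 0 2)) (Decidable.decide (0 ≤ B 2 0)) (Decidable.decide (0 ≤ B 0 3)) (Decidable.decide (0 ≤ B 3 0)) (Decidable.decide (0 ≤ B 1 2)) (Decidable.decide (0 ≤ B 2 1)) (Decidable.decide (0 ≤ B 1 3)) (Decidable.decide (0 ≤ B 3 1)) (Decidable.decide (0 ≤ B 2 3)) (Decidable.decide (0 ≤ B 3 2)) (tot 0 1) (tot 0 2) (tot 0 3) (tot 1 2) (tot 1 3) (tot 2 3)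
  simp only [Bool.or_eq_true, Bool.and_eq_true, decide_eq_true_eq] at key
  rcases key with (((((((((((((((((((((((⟨⟨h1, h2⟩, h3⟩|⟨⟨h1, h2⟩, h3⟩)|⟨⟨h1, h2⟩, h3⟩)|⟨⟨h1, h2⟩, h3⟩)|⟨⟨h1, h2⟩, h3⟩)|⟨⟨h1, h2⟩, h3⟩)|⟨⟨h1, h2⟩, h3⟩)|⟨⟨h1, h2⟩, h3⟩)|⟨⟨h1, h2⟩, h3⟩)|⟨⟨h1, h2⟩, h3⟩)|⟨⟨h1, h2⟩, h3⟩)|⟨⟨h1, h2⟩, h3⟩)|⟨⟨h1, h2⟩, h3⟩)|⟨⟨h1, h2⟩, h3⟩)|⟨⟨h1, h2⟩, h3⟩)|⟨⟨h1, h2⟩, h3⟩)|⟨⟨h1, h2⟩, h3⟩)|⟨⟨h1, h2⟩, h3⟩)|⟨⟨h1, h2⟩, h3⟩)|⟨⟨h1, h2⟩, h3⟩)|⟨⟨h1, h2⟩, h3⟩)|⟨⟨h1, h2⟩, h3⟩)|⟨⟨h1, h2⟩, h3⟩)|⟨⟨h1, h2⟩, h3⟩)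
  · exact ⟨0, 1, 2, by decide, by decide, by decide, h1, h2, h3⟩
  · exact ⟨0, 1, 3, by decide, by decide, by decide, h1, h2, h3⟩
  · exact ⟨0, 2, 1, by decide, by decide, by decide, h1, h2, h3⟩
  · exact ⟨0, 2, 3, by decide, by decide, by decide, h1, h2, h3⟩
  · exact ⟨0, 3, 1, by decide, by decide, by decide, h1, h2, h3⟩
  · exact ⟨0, 3, 2, by decide, by decide, by decide, h1, h2, h3⟩
  · exact ⟨1, 0, 2, by decide, by decide, by decide, h1, h2, h3⟩
  · exact ⟨1, 0, 3, by decide, by decide, by decide, h1, h2, h3⟩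
  · exact ⟨1, 2, 0, by decide, by decide, by decide, h1, h2, h3⟩
  · exact ⟨1, 2, 3, by decide, by decide, by decide, h1, h2, h3⟩
  · exact ⟨1, 3, 0, by decide, by decide, by decide, h1, h2, h3⟩
  · exact ⟨1, 3, 2, by decide, by decide, by decide, h1, h2, h3⟩
  · exact ⟨2, 0, 1, by decide, by decide, by decide, h1, h2, h3⟩
  · exact ⟨2, 0, 3, by decide, by decide, by decide, h1, h2, h3⟩
  · exact ⟨2, 1, 0, by decide, by decide, by decide, h1, h2, h3⟩
  · exact ⟨2, 1, 3, by decide, by decide, by decide, h1, h2, h3⟩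
  · exact ⟨2, 3, 0, by decide, by decide, by decide, h1, h2, h3⟩
  · exact ⟨2, 3, 1, by decide, by decide, by decide, h1, h2, h3⟩
  · exact ⟨3, 0, 1, by decide, by decide, by decide, h1, h2, h3⟩
  · exact ⟨3, 0, 2, by decide, by decide, by decide, h1, h2, h3⟩
  · exact ⟨3, 1, 0, by decide, by decide, by decide, h1, h2, h3⟩
  · exact ⟨3, 1, 2, by decide, by decide, by decide, h1, h2, h3⟩
  · exact ⟨3, 2, 0, by decide, by decide, by decide, h1, h2, h3⟩
  · exact ⟨3, 2, 1, by decide, by decide, by decide, h1, h2, h3⟩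

lemma exists_chain {n : ℕ} (hn : n ≤ 4) (B : Fin n → Fin n → ℤ) (hB : IsSkew B) :
    ∃ l : List (Fin n), l.Nodup ∧ l.length = n - 1 ∧
      l.Pairwise (fun a b => 0 ≤ B a b) := by
  interval_cases n
  · exact ⟨[], by simp, rfl, by simp⟩
  · exact ⟨[], by simp, rfl, by simp⟩
  · exact ⟨[0], by simp, rfl, by simp⟩
  · rcases le_or_gt 0 (B 0 1) with h | h
    · exact ⟨[0, 1], by decide, rfl, by simp [List.pairwise_cons, h]⟩
    · have h' : 0 ≤ B 1 0 := by rw [hB 1 0]; omega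
      exact ⟨[1, 0], by decide, rfl, by simp [List.pairwise_cons, h']⟩
  · obtain ⟨a, b, c, hab, hac, hbc, h1, h2, h3⟩ := exists_triple B hB
    refine ⟨[a, b, c], by simp [hab, hac, hbc], rfl, ?_⟩
    simp [List.pairwise_cons, h1, h2, h3]

end Aux

/-- a connected quiver on at most 4 vertices has `Red(Q) ≥ |V(Q)| - 1`. -/
theorem red_small_quivers {n : ℕ} (hn : n ≤ 4) (B : Fin n → Fin n → ℤ)
    (hB : IsSkew B) (hconn : QConnected B) :
    n - 1 ≤ RedNum B := by
  obtain ⟨l, hnd, hlen, hpair⟩ := exists_chain hn B hB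
  have hmain := green_main l [] B (fun i j => if i = j then 1 else 0) hB
    (by simpa using hnd) (by simp) (fun b _ j => rfl) (by simp) hpair
  have hgs : IsGreenSeq (framed B) l := hmain.1
  set p := applyE l (framed B) with hp
  have hred : ∀ a ∈ l, IsRed p a := by
    intro a ha
    refine ⟨a, ?_⟩
    have hval := hmain.2 a (by simpa using ha) a
    show p.2 a a < 0
    have : p = applyE l (B, fun i j => if i = j then (1:ℤ) else 0) := rfl
    rw [this, hval]
    simp
  have hsub : (↑l.toFinset : Set (Fin n)) ⊆ {i | IsRed p i} := by
    intro x hx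
    exact hred x (by simpa using hx)
  have hcard : n - 1 ≤ redCount p := by
    have h1 : redCount p = Set.ncard {i | IsRed p i} := by
      rw [redCount, ← Nat.card_coe_set_eq]
      rfl
    have h2 : (↑l.toFinset : Set (Fin n)).ncard = l.length := by
      rw [Set.ncard_coe_finset, List.toFinset_card_of_nodup hnd]
    have h3 : (↑l.toFinset : Set (Fin n)).ncard ≤ Set.ncard {i | IsRed p i} :=
      Set.ncard_le_ncard hsub (Set.toFinite _)
    omega
  have hbdd : BddAbove {m : ℕ | ∃ l : List (Fin n),
      IsGreenSeq (framed B) l ∧ redCount (applyE l (framed B)) = m} := by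
    refine ⟨n, ?_⟩
    rintro m ⟨l', -, rfl⟩
    have hle : Nat.card {i : Fin n // IsRed (applyE l' (framed B)) i} ≤ Nat.card (Fin n) :=
      Nat.card_le_card_of_injective (fun x => x.1) Subtype.val_injective
    simpa [redCount] using hle
  have hmem : redCount p ∈ {m : ℕ | ∃ l : List (Fin n),
      IsGreenSeq (framed B) l ∧ redCount (applyE l (framed B)) = m} := ⟨l, hgs, rfl⟩
  exact le_trans hcard (le_csSup hbdd hmem)
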